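/- In the VRADAM (Option A) setting, assume F is bounded below by F_inf > −∞ and the step sizes satisfy ∑_{t=1}^∞ α_t = +∞ and ∑_{t=1}^∞ α_t² < +∞. Then for every initial point w̃₁ and every choice of mini-batches, liminf_{t→∞} ‖∇F(w̃_t)‖₂ = 0. -/

import Mathlib

open MeasureTheory Filter

/-- The full-batch objective `F = (1/N) ∑_n f_n`. -/
noncomputable def fullLoss (d N : ℕ) (f : Fin N → EuclideanSpace ℝ (Fin d) → ℝ) :
    EuclideanSpace ℝ (Fin d) → ℝ :=
  fun x => (1 / (N : ℝ)) * ∑ n, f n x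

/-- The mini-batch objective `F^B = (1/b) ∑_{n ∈ B} f_n`. -/
noncomputable def batchLoss (d N : ℕ) (b : ℕ) (f : Fin N → EuclideanSpace ℝ (Fin d) → ℝ)
    (B : Finset (Fin N)) : EuclideanSpace ℝ (Fin d) → ℝ :=
  fun x => (1 / (b : ℝ)) * ∑ n ∈ B, f n x

set_option maxHeartbeats 1000000

open InnerProductSpace

section Helpers

variable {E : Type*} [NormedAddCommGroup E] [InnerProductSpace ℝ E] [CompleteSpace E]

theorem vradam_grad_const_mul_sum {ι : Type*} (S : Finset ι) (f : ι → E → ℝ) (c : ℝ)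
    (hdiff : ∀ n, Differentiable ℝ (f n)) (x : E) :
    gradient (fun x => c * ∑ n ∈ S, f n x) x = c • ∑ n ∈ S, gradient (f n) x := by
  have h1 : fderiv ℝ (fun x => c * ∑ n ∈ S, f n x) x
      = c • ∑ n ∈ S, fderiv ℝ (f n) x := by
    rw [fderiv_const_mul ((Differentiable.fun_sum (fun n _ => hdiff n)).differentiableAt) c]
    congr 1
    exact fderiv_fun_sum (fun n _ => (hdiff n).differentiableAt)
  unfold gradient
  rw [h1, _root_.map_smul, map_sum]

theorem vradam_fderiv_eq_inner_gradient (f : E → ℝ) (x v : E) :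
    fderiv ℝ f x v = ⟪gradient f x, v⟫_ℝ := by
  unfold gradient
  rw [← toDual_apply_apply, LinearIsometryEquiv.apply_symm_apply]

theorem vradam_descent_lemma (F : E → ℝ) (L : ℝ) (hL : 0 < L) (hF : Differentiable ℝ F)
    (hlip : LipschitzWith (Real.toNNReal L) (gradient F)) (x y : E) :
    F y ≤ F x + ⟪gradient F x, y - x⟫_ℝ + L / 2 * ‖y - x‖ ^ 2 := by
  set A : ℝ := ⟪gradient F x, y - x⟫_ℝ with hA
  set c : ℝ → E := fun s => x + s • (y - x) with hc
  have hcd : ∀ s : ℝ, HasDerivAt c (y - x) s := by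
    intro s
    convert ((hasDerivAt_id s).smul_const (y - x)).const_add x using 1 <;> simp [hc]
  set D : ℝ → ℝ := fun s => ⟪gradient F (c s), y - x⟫_ℝ with hD
  have hφd : ∀ s : ℝ, HasDerivAt (fun s => F (c s)) (D s) s := by
    intro s
    have h1 : HasFDerivAt F (fderiv ℝ F (c s)) (c s) := (hF (c s)).hasFDerivAt
    have := h1.comp_hasDerivAt s (hcd s)
    exact this.congr_deriv (vradam_fderiv_eq_inner_gradient F (c s) (y - x))
  set ψ : ℝ → ℝ := fun s => F (c s) - s * A - L * ‖y - x‖ ^ 2 / 2 * s ^ 2 with hψ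
  have hψd : ∀ s : ℝ, HasDerivAt ψ (D s - A - L * ‖y - x‖ ^ 2 * s) s := by
    intro s
    have h2 : HasDerivAt (fun s : ℝ => s * A) A s := by simpa using (hasDerivAt_id s).mul_const A
    have h3 : HasDerivAt (fun s : ℝ => L * ‖y - x‖ ^ 2 / 2 * s ^ 2)
        (L * ‖y - x‖ ^ 2 * s) s := by
      have := (hasDerivAt_pow 2 s).const_mul (L * ‖y - x‖ ^ 2 / 2)
      exact this.congr_deriv (by ring)
    exact ((hφd s).sub h2).sub h3
  have key : ψ 1 ≤ ψ 0 := by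
    have hanti : AntitoneOn ψ (Set.Icc 0 1) := by
      apply antitoneOn_of_deriv_nonpos (convex_Icc 0 1)
      · exact fun s _ => ((hψd s).continuousAt).continuousWithinAt
      · exact fun s _ => ((hψd s).differentiableAt).differentiableWithinAt
      · intro s hs
        rw [interior_Icc] at hs
        rw [(hψd s).deriv]
        have hds : D s - A ≤ L * ‖y - x‖ ^ 2 * s := by
          have h4 : D s - A = ⟪gradient F (c s) - gradient F x, y - x⟫_ℝ := by
            rw [hD, hA, inner_sub_left]
          rw [h4]
          calc ⟪gradient F (c s) - gradient F x, y - x⟫_ℝ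
              ≤ ‖gradient F (c s) - gradient F x‖ * ‖y - x‖ := real_inner_le_norm _ _
            _ ≤ L * ‖c s - x‖ * ‖y - x‖ := by
                apply mul_le_mul_of_nonneg_right _ (norm_nonneg _)
                have := hlip.dist_le_mul (c s) x
                rw [Real.coe_toNNReal _ hL.le] at this
                simpa [dist_eq_norm] using this
            _ = L * ‖y - x‖ ^ 2 * s := by
                have : ‖c s - x‖ = s * ‖y - x‖ := by
                  simp [hc, norm_smul, abs_of_pos hs.1]
                rw [this]; ring
        linarith
    exact hanti (by norm_num) (by norm_num) (by norm_num)
  have h0 : ψ 0 = F x := by simp [hψ, hc]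
  have h1 : ψ 1 = F y - A - L * ‖y - x‖ ^ 2 / 2 := by simp [hψ, hc]
  rw [h0, h1] at key
  linarith

end Helpers

section EuclidHelpers

variable {d : ℕ}

theorem vradam_euclid_norm_sq (x : EuclideanSpace ℝ (Fin d)) : ‖x‖^2 = ∑ i, (x i)^2 := by
  rw [EuclideanSpace.norm_eq]
  simp only [Real.norm_eq_abs, sq_abs]
  rw [Real.sq_sqrt (Finset.sum_nonneg fun i _ => sq_nonneg _)]

theorem vradam_coord_le_norm (x : EuclideanSpace ℝ (Fin d)) (i : Fin d) : |x i| ≤ ‖x‖ := by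
  rw [EuclideanSpace.norm_eq]
  simp only [Real.norm_eq_abs, sq_abs]
  rw [show |x i| = Real.sqrt ((x i)^2) by rw [Real.sqrt_sq_eq_abs]]
  apply Real.sqrt_le_sqrt
  exact Finset.single_le_sum (fun j _ => sq_nonneg (x j)) (Finset.mem_univ i)

theorem vradam_norm_le (x : EuclideanSpace ℝ (Fin d)) (c : ℝ) (hc : 0 ≤ c)
    (h : ∀ i, |x i| ≤ c) : ‖x‖ ≤ Real.sqrt d * c := by
  rw [EuclideanSpace.norm_eq]
  simp only [Real.norm_eq_abs, sq_abs]
  have h1 : ∑ i, (x i)^2 ≤ ∑ _i : Fin d, c^2 := by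
    apply Finset.sum_le_sum
    intro i _
    rw [← sq_abs]
    exact pow_le_pow_left₀ (abs_nonneg _) (h i) 2
  calc Real.sqrt (∑ i, (x i)^2) ≤ Real.sqrt (d * c^2) := by
        apply Real.sqrt_le_sqrt; simpa using h1
    _ = Real.sqrt d * c := by
        rw [Real.sqrt_mul (by positivity), Real.sqrt_sq hc]

theorem vradam_norm_le_norm_div (x y : EuclideanSpace ℝ (Fin d)) (c : ℝ) (hc : 0 < c)
    (h : ∀ i, |x i| ≤ |y i| / c) : ‖x‖ ≤ ‖y‖ / c := by
  rw [EuclideanSpace.norm_eq, EuclideanSpace.norm_eq]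
  simp only [Real.norm_eq_abs, sq_abs]
  rw [div_eq_mul_inv, ← Real.sqrt_sq (inv_nonneg.2 hc.le), ← Real.sqrt_mul (by positivity)]
  apply Real.sqrt_le_sqrt
  rw [Finset.sum_mul]
  apply Finset.sum_le_sum
  intro i _
  have h2 : (x i)^2 ≤ (|y i| / c)^2 := by
    rw [← sq_abs]
    exact pow_le_pow_left₀ (abs_nonneg _) (h i) 2
  calc (x i)^2 ≤ (|y i| / c)^2 := h2
    _ = (y i)^2 * (c⁻¹)^2 := by rw [div_pow, sq_abs, div_eq_mul_inv, inv_pow]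

theorem vradam_inner_eq (x y : EuclideanSpace ℝ (Fin d)) :
    ⟪x, y⟫_ℝ = ∑ i, x i * y i := by
  simp [PiLp.inner_apply, RCLike.inner_apply, mul_comm]

end EuclidHelpers

/-- Convergence of VRADAM (Option A) for lower-bounded objectives: if `F ≥ F_inf`,
`∑ α_t = ∞` and `∑ α_t² < ∞`, then for every initial point and every choice of
mini-batches, `liminf_{t→∞} ‖∇F(w̃_t)‖ = 0`. -/
theorem vradam_nonconvex_liminf
    (d N b m : ℕ) (hN : 0 < N) (hb : 0 < b) (hm : 0 < m)
    (f : Fin N → EuclideanSpace ℝ (Fin d) → ℝ) (L G : ℝ) (hL : 0 < L) (hG : 0 < G)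
    (hdiff : ∀ n, Differentiable ℝ (f n))
    (hlip : ∀ n, LipschitzWith (Real.toNNReal L) (gradient (f n)))
    (hbdd : ∀ n x, ‖gradient (f n) x‖ ≤ G)
    (β₁ β₂ ε : ℝ) (hβ₁0 : 0 ≤ β₁) (hβ₁1 : β₁ < 1) (hβ₂0 : 0 ≤ β₂) (hβ₂1 : β₂ < 1)
    (hε : 0 < ε)
    (Finf : ℝ) (hFinf : ∀ x, Finf ≤ fullLoss d N f x)
    (α : ℕ → ℝ) (hα : ∀ t, 0 < α t)
    (hdiv : ¬ Summable α) (hsq : Summable fun t => (α t) ^ 2)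
    (B : ℕ → ℕ → Finset (Fin N)) (hB : ∀ t k, (B t k).card = b)
    (wt : ℕ → EuclideanSpace ℝ (Fin d))
    (w mm v g : ℕ → ℕ → EuclideanSpace ℝ (Fin d))
    -- VRADAM inner loop with resetting (Option A)
    (hw1 : ∀ t : ℕ, 1 ≤ t → w t 1 = wt t)
    (hm0 : ∀ t, mm t 0 = 0) (hv0 : ∀ t, v t 0 = 0)
    (hg : ∀ t : ℕ, 1 ≤ t → ∀ k ∈ Finset.Icc 1 m,
      g t k = gradient (batchLoss d N b f (B t k)) (w t k)
        - gradient (batchLoss d N b f (B t k)) (wt t)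
        + gradient (fullLoss d N f) (wt t))
    (hmrec : ∀ t : ℕ, 1 ≤ t → ∀ k ∈ Finset.Icc 1 m,
      mm t k = β₁ • mm t (k - 1) + (1 - β₁) • g t k)
    (hvrec : ∀ t : ℕ, 1 ≤ t → ∀ k ∈ Finset.Icc 1 m, ∀ i,
      v t k i = β₂ * v t (k - 1) i + (1 - β₂) * (g t k i) ^ 2)
    (hwrec : ∀ t : ℕ, 1 ≤ t → ∀ k ∈ Finset.Icc 1 m, ∀ i,
      w t (k + 1) i = w t k i -
        α t * (mm t k i / (1 - β₁ ^ k)) / Real.sqrt (v t k i / (1 - β₂ ^ k) + ε))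
    (hnext : ∀ t : ℕ, 1 ≤ t → wt (t + 1) = w t (m + 1)) :
    Filter.liminf (fun t => ‖gradient (fullLoss d N f) (wt t)‖) atTop = 0 := by
  have hNR : (0:ℝ) < N := Nat.cast_pos.2 hN
  have hbR : (0:ℝ) < b := Nat.cast_pos.2 hb
  have hmR : (0:ℝ) < m := Nat.cast_pos.2 hm
  -- gradient formulas
  have hFl_diff : Differentiable ℝ (fullLoss d N f) := by
    unfold fullLoss
    exact (Differentiable.fun_sum fun n _ => hdiff n).const_mul _
  have hgradFl : ∀ x, gradient (fullLoss d N f) x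
      = (1/(N:ℝ)) • ∑ n, gradient (f n) x := fun x =>
    vradam_grad_const_mul_sum Finset.univ f (1/(N:ℝ)) hdiff x
  have hgradB : ∀ (Bk : Finset (Fin N)) x, gradient (batchLoss d N b f Bk) x
      = (1/(b:ℝ)) • ∑ n ∈ Bk, gradient (f n) x := fun Bk x =>
    vradam_grad_const_mul_sum Bk f (1/(b:ℝ)) hdiff x
  -- norm bound for full gradient
  have hgradFl_bdd : ∀ x, ‖gradient (fullLoss d N f) x‖ ≤ G := by
    intro x
    rw [hgradFl, norm_smul, Real.norm_eq_abs, abs_of_pos (one_div_pos.2 hNR)]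
    have h1 : ‖∑ n, gradient (f n) x‖ ≤ (N:ℝ) * G := by
      refine (norm_sum_le _ _).trans ?_
      calc ∑ n, ‖gradient (f n) x‖ ≤ ∑ _n : Fin N, G :=
            Finset.sum_le_sum fun n _ => hbdd n x
        _ = (N:ℝ) * G := by simp [Finset.sum_const, Finset.card_univ, mul_comm]
      -- nsmul
    calc (1/(N:ℝ)) * ‖∑ n, gradient (f n) x‖ ≤ (1/(N:ℝ)) * ((N:ℝ)*G) := by
          apply mul_le_mul_of_nonneg_left h1 (one_div_pos.2 hNR).le
      _ = G := by field_simp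
  -- batch gradient bound
  have hgradB_bdd : ∀ (t k : ℕ) (x : EuclideanSpace ℝ (Fin d)),
      ‖gradient (batchLoss d N b f (B t k)) x‖ ≤ G := by
    intro t k x
    rw [hgradB, norm_smul, Real.norm_eq_abs, abs_of_pos (one_div_pos.2 hbR)]
    have h1 : ‖∑ n ∈ B t k, gradient (f n) x‖ ≤ (b:ℝ) * G := by
      refine (norm_sum_le _ _).trans ?_
      calc ∑ n ∈ B t k, ‖gradient (f n) x‖ ≤ ∑ _n ∈ B t k, G :=
            Finset.sum_le_sum fun n _ => hbdd n x
        _ = (b:ℝ) * G := by simp [Finset.sum_const, hB t k, mul_comm]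
    calc (1/(b:ℝ)) * ‖∑ n ∈ B t k, gradient (f n) x‖ ≤ (1/(b:ℝ)) * ((b:ℝ)*G) := by
          apply mul_le_mul_of_nonneg_left h1 (one_div_pos.2 hbR).le
      _ = G := by field_simp
  -- Lipschitz estimates
  have hlipn : ∀ n (x y : EuclideanSpace ℝ (Fin d)),
      ‖gradient (f n) x - gradient (f n) y‖ ≤ L * ‖x - y‖ := by
    intro n x y
    have := (hlip n).dist_le_mul x y
    rw [Real.coe_toNNReal _ hL.le] at this
    simpa [dist_eq_norm] using this
  have hB_lip : ∀ (t k : ℕ) (x y : EuclideanSpace ℝ (Fin d)),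
      ‖gradient (batchLoss d N b f (B t k)) x - gradient (batchLoss d N b f (B t k)) y‖
        ≤ L * ‖x - y‖ := by
    intro t k x y
    rw [hgradB, hgradB, ← smul_sub, ← Finset.sum_sub_distrib, norm_smul,
      Real.norm_eq_abs, abs_of_pos (one_div_pos.2 hbR)]
    have h1 : ‖∑ n ∈ B t k, (gradient (f n) x - gradient (f n) y)‖ ≤ (b:ℝ) * (L*‖x-y‖) := by
      refine (norm_sum_le _ _).trans ?_
      calc ∑ n ∈ B t k, ‖gradient (f n) x - gradient (f n) y‖
          ≤ ∑ _n ∈ B t k, L*‖x-y‖ := Finset.sum_le_sum fun n _ => hlipn n x y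
        _ = (b:ℝ) * (L*‖x-y‖) := by simp [Finset.sum_const, hB t k, mul_comm]
    calc (1/(b:ℝ)) * ‖∑ n ∈ B t k, (gradient (f n) x - gradient (f n) y)‖
        ≤ (1/(b:ℝ)) * ((b:ℝ)*(L*‖x-y‖)) := by
          apply mul_le_mul_of_nonneg_left h1 (one_div_pos.2 hbR).le
      _ = L * ‖x-y‖ := by field_simp
  have hFl_lip_norm : ∀ (x y : EuclideanSpace ℝ (Fin d)),
      ‖gradient (fullLoss d N f) x - gradient (fullLoss d N f) y‖ ≤ L * ‖x - y‖ := by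
    intro x y
    rw [hgradFl, hgradFl, ← smul_sub, ← Finset.sum_sub_distrib, norm_smul,
      Real.norm_eq_abs, abs_of_pos (one_div_pos.2 hNR)]
    have h1 : ‖∑ n, (gradient (f n) x - gradient (f n) y)‖ ≤ (N:ℝ) * (L*‖x-y‖) := by
      refine (norm_sum_le _ _).trans ?_
      calc ∑ n, ‖gradient (f n) x - gradient (f n) y‖
          ≤ ∑ _n : Fin N, L*‖x-y‖ := Finset.sum_le_sum fun n _ => hlipn n x y
        _ = (N:ℝ) * (L*‖x-y‖) := by simp [Finset.sum_const, Finset.card_univ, mul_comm]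
    calc (1/(N:ℝ)) * ‖∑ n, (gradient (f n) x - gradient (f n) y)‖
        ≤ (1/(N:ℝ)) * ((N:ℝ)*(L*‖x-y‖)) := by
          apply mul_le_mul_of_nonneg_left h1 (one_div_pos.2 hNR).le
      _ = L * ‖x-y‖ := by field_simp
  have hFl_lip : LipschitzWith (Real.toNNReal L) (gradient (fullLoss d N f)) := by
    apply LipschitzWith.of_dist_le_mul
    intro x y
    rw [dist_eq_norm, dist_eq_norm, Real.coe_toNNReal _ hL.le]
    exact hFl_lip_norm x y
  -- constants
  set sε := Real.sqrt ε with hsεdef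
  have hsε : 0 < sε := Real.sqrt_pos.2 hε
  set Dmax := Real.sqrt ((3*G)^2 + ε) with hDmaxdef
  have hDmax : 0 < Dmax := Real.sqrt_pos.2 (by nlinarith [sq_nonneg (3*G)])
  set Q := Real.sqrt d * (3*G/sε) with hQdef
  have hQ0 : 0 ≤ Q := mul_nonneg (Real.sqrt_nonneg _) (div_nonneg (by linarith) hsε.le)
  set C₁ := L * m * Q * (G/sε + Q) with hC₁def
  have hC₁0 : 0 ≤ C₁ := mul_nonneg (mul_nonneg (mul_nonneg hL.le hmR.le) hQ0) (add_nonneg (div_nonneg hG.le hsε.le) hQ0)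
  set C₂ := C₁ + L * Q^2/2 with hC₂def
  have hC₂0 : 0 ≤ C₂ := add_nonneg hC₁0 (div_nonneg (mul_nonneg hL.le (sq_nonneg _)) (by norm_num))
  have hβ₁klt : ∀ k : ℕ, 1 ≤ k → 0 < 1 - β₁^k := by
    intro k hk
    have : β₁^k < 1 := pow_lt_one₀ hβ₁0 hβ₁1 (by omega)
    linarith
  have hβ₂klt : ∀ k : ℕ, 1 ≤ k → 0 < 1 - β₂^k := by
    intro k hk
    have : β₂^k < 1 := pow_lt_one₀ hβ₂0 hβ₂1 (by omega)
    linarith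
  have hβ₁kle : ∀ k : ℕ, β₁^k ≤ 1 := fun k => pow_le_one₀ hβ₁0 hβ₁1.le
  -- THE KEY per-outer-step estimate
  have key : ∀ t : ℕ, 1 ≤ t →
      fullLoss d N f (wt (t+1)) ≤ fullLoss d N f (wt t)
        - (m:ℝ) * (α t * (‖gradient (fullLoss d N f) (wt t)‖^2 / Dmax))
        + (m:ℝ) * (C₂ * α t ^ 2) := by
    intro t ht
    set hh := gradient (fullLoss d N f) (wt t) with hhdef
    have hhG : ‖hh‖ ≤ G := hgradFl_bdd _
    have hgsub : ∀ k, 1 ≤ k → k ≤ m → g t k - hh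
        = gradient (batchLoss d N b f (B t k)) (w t k)
          - gradient (batchLoss d N b f (B t k)) (wt t) := by
      intro k h1 h2
      rw [hg t ht k (Finset.mem_Icc.2 ⟨h1, h2⟩)]
      abel
    have hgdev : ∀ k, 1 ≤ k → k ≤ m → ‖g t k - hh‖ ≤ L * ‖w t k - wt t‖ := by
      intro k h1 h2
      rw [hgsub k h1 h2]
      exact hB_lip t k _ _
    have hgdev2 : ∀ k, 1 ≤ k → k ≤ m → ‖g t k - hh‖ ≤ 2*G := by
      intro k h1 h2
      rw [hgsub k h1 h2]
      calc ‖_ - _‖ ≤ ‖gradient (batchLoss d N b f (B t k)) (w t k)‖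
            + ‖gradient (batchLoss d N b f (B t k)) (wt t)‖ := norm_sub_le _ _
        _ ≤ G + G := add_le_add (hgradB_bdd t k _) (hgradB_bdd t k _)
        _ = 2*G := by ring
    have hgcrude : ∀ k, 1 ≤ k → k ≤ m → ‖g t k‖ ≤ 3*G := by
      intro k h1 h2
      calc ‖g t k‖ = ‖(g t k - hh) + hh‖ := by congr 1; abel
        _ ≤ ‖g t k - hh‖ + ‖hh‖ := norm_add_le _ _
        _ ≤ 2*G + G := add_le_add (hgdev2 k h1 h2) hhG
        _ = 3*G := by ring
    -- momentum deviation bound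
    have hmmE : ∀ E : ℝ, 0 ≤ E → (∀ j, 1 ≤ j → j ≤ m → ‖g t j - hh‖ ≤ E) →
        ∀ k, k ≤ m → ‖mm t k - (1-β₁^k) • hh‖ ≤ (1-β₁^k) * E := by
      intro E hE hgE k
      induction k with
      | zero => intro _; simp [hm0]
      | succ k ih =>
        intro hk1
        have hkm : k ≤ m := Nat.le_of_succ_le hk1
        have ihk := ih hkm
        have hrec := hmrec t ht (k+1) (Finset.mem_Icc.2 ⟨Nat.le_add_left 1 k, hk1⟩)
        simp only [Nat.add_sub_cancel] at hrec
        have heq : mm t (k+1) - (1-β₁^(k+1)) • hh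
            = β₁ • (mm t k - (1-β₁^k) • hh) + (1-β₁) • (g t (k+1) - hh) := by
          rw [hrec, show (1:ℝ)-β₁^(k+1) = β₁*(1-β₁^k) + (1-β₁) by ring]
          module
        rw [heq]
        have h1 : ‖β₁ • (mm t k - (1-β₁^k) • hh)‖ ≤ β₁ * ((1-β₁^k)*E) := by
          rw [norm_smul, Real.norm_eq_abs, abs_of_nonneg hβ₁0]
          exact mul_le_mul_of_nonneg_left ihk hβ₁0
        have h2 : ‖(1-β₁) • (g t (k+1) - hh)‖ ≤ (1-β₁) * E := by
          rw [norm_smul, Real.norm_eq_abs, abs_of_nonneg (by linarith)]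
          exact mul_le_mul_of_nonneg_left (hgE (k+1) (Nat.le_add_left 1 k) hk1) (by linarith)
        calc ‖_ + _‖ ≤ ‖β₁ • (mm t k - (1-β₁^k) • hh)‖ + ‖(1-β₁) • (g t (k+1) - hh)‖ :=
              norm_add_le _ _
          _ ≤ β₁*((1-β₁^k)*E) + (1-β₁)*E := add_le_add h1 h2
          _ = (1-β₁^(k+1))*E := by ring
    have hmm_crude : ∀ k, k ≤ m → ‖mm t k‖ ≤ (1-β₁^k) * (3*G) := by
      intro k hk
      have h1 := hmmE (2*G) (by linarith) (fun j a c => hgdev2 j a c) k hk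
      have hb1 : 0 ≤ 1 - β₁^k := by have := hβ₁kle k; linarith
      have h2 : ‖(1-β₁^k) • hh‖ ≤ (1-β₁^k) * G := by
        rw [norm_smul, Real.norm_eq_abs, abs_of_nonneg hb1]
        exact mul_le_mul_of_nonneg_left hhG hb1
      calc ‖mm t k‖ = ‖(mm t k - (1-β₁^k) • hh) + (1-β₁^k) • hh‖ := by congr 1; abel
        _ ≤ ‖mm t k - (1-β₁^k) • hh‖ + ‖(1-β₁^k) • hh‖ := norm_add_le _ _
        _ ≤ (1-β₁^k)*(2*G) + (1-β₁^k)*G := add_le_add h1 h2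
        _ = (1-β₁^k)*(3*G) := by ring
    -- v bounds
    have hv_bound : ∀ k, k ≤ m → ∀ i, 0 ≤ v t k i ∧ v t k i ≤ (1-β₂^k) * (3*G)^2 := by
      intro k
      induction k with
      | zero => intro _ i; simp [hv0]
      | succ k ih =>
        intro hk1 i
        have hkm : k ≤ m := Nat.le_of_succ_le hk1
        obtain ⟨ih1, ih2⟩ := ih hkm i
        have hrec := hvrec t ht (k+1) (Finset.mem_Icc.2 ⟨Nat.le_add_left 1 k, hk1⟩) i
        simp only [Nat.add_sub_cancel] at hrec
        have hgi : (g t (k+1) i)^2 ≤ (3*G)^2 := by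
          have ha1 : |g t (k+1) i| ≤ 3*G :=
            (vradam_coord_le_norm _ i).trans (hgcrude (k+1) (Nat.le_add_left 1 k) hk1)
          rw [← sq_abs]
          exact pow_le_pow_left₀ (abs_nonneg _) ha1 2
        constructor
        · rw [hrec]
          have hp1 : 0 ≤ β₂ * v t k i := mul_nonneg hβ₂0 ih1
          have hp2 : 0 ≤ (1-β₂) * (g t (k+1) i)^2 :=
            mul_nonneg (by linarith) (sq_nonneg _)
          linarith
        · rw [hrec]
          have hp1 : β₂ * v t k i ≤ β₂ * ((1-β₂^k) * (3*G)^2) :=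
            mul_le_mul_of_nonneg_left ih2 hβ₂0
          have hp2 : (1-β₂) * (g t (k+1) i)^2 ≤ (1-β₂) * (3*G)^2 :=
            mul_le_mul_of_nonneg_left hgi (by linarith)
          have hp3 : β₂ * ((1-β₂^k) * (3*G)^2) + (1-β₂)*(3*G)^2
              = (1-β₂^(k+1)) * (3*G)^2 := by ring
          linarith
    -- denominator bounds
    have hden : ∀ k, 1 ≤ k → k ≤ m → ∀ i,
        sε ≤ Real.sqrt (v t k i/(1-β₂^k)+ε) ∧ Real.sqrt (v t k i/(1-β₂^k)+ε) ≤ Dmax := by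
      intro k h1 h2 i
      have hb2 : 0 < 1 - β₂^k := hβ₂klt k h1
      obtain ⟨hv1, hv2⟩ := hv_bound k h2 i
      have hr1 : 0 ≤ v t k i/(1-β₂^k) := div_nonneg hv1 hb2.le
      have hr2 : v t k i/(1-β₂^k) ≤ (3*G)^2 := by
        rw [div_le_iff₀ hb2]
        calc v t k i ≤ (1-β₂^k)*(3*G)^2 := hv2
          _ = (3*G)^2 * (1-β₂^k) := by ring
      constructor
      · rw [hsεdef]
        apply Real.sqrt_le_sqrt
        linarith
      · rw [hDmaxdef]
        apply Real.sqrt_le_sqrt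
        linarith
    -- position bound
    have hstep : ∀ k, 1 ≤ k → k ≤ m → ‖w t (k+1) - w t k‖ ≤ α t * Q := by
      intro k h1 h2
      have hcoord : ∀ i, |(w t (k+1) - w t k) i| ≤ α t * (3*G/sε) := by
        intro i
        have hrec := hwrec t ht k (Finset.mem_Icc.2 ⟨h1, h2⟩) i
        have hshow : (w t (k+1) - w t k) i = w t (k+1) i - w t k i := rfl
        rw [hshow, hrec]
        have hb1 : 0 < 1 - β₁^k := hβ₁klt k h1
        have hdenp : 0 < Real.sqrt (v t k i/(1-β₂^k)+ε) := lt_of_lt_of_le hsε (hden k h1 h2 i).1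
        have hmi : |mm t k i / (1-β₁^k)| ≤ 3*G := by
          rw [abs_div, abs_of_pos hb1, div_le_iff₀ hb1]
          calc |mm t k i| ≤ ‖mm t k‖ := vradam_coord_le_norm _ i
            _ ≤ (1-β₁^k)*(3*G) := hmm_crude k h2
            _ = 3*G*(1-β₁^k) := by ring
        have habs : |w t k i - α t * (mm t k i / (1 - β₁ ^ k)) / Real.sqrt (v t k i / (1 - β₂ ^ k) + ε) - w t k i|
            = α t * |mm t k i / (1-β₁^k)| / Real.sqrt (v t k i/(1-β₂^k)+ε) := by
          rw [show w t k i - α t * (mm t k i / (1 - β₁ ^ k)) / Real.sqrt (v t k i / (1 - β₂ ^ k) + ε) - w t k i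
              = -(α t * (mm t k i / (1 - β₁ ^ k)) / Real.sqrt (v t k i / (1 - β₂ ^ k) + ε)) by ring]
          rw [abs_neg, abs_div, abs_mul, abs_of_pos (hα t), abs_of_pos hdenp]
        rw [habs]
        calc α t * |mm t k i / (1-β₁^k)| / Real.sqrt (v t k i/(1-β₂^k)+ε)
            ≤ α t * (3*G) / Real.sqrt (v t k i/(1-β₂^k)+ε) := by
              exact (div_le_div_iff_of_pos_right hdenp).2 (mul_le_mul_of_nonneg_left hmi (hα t).le)
          _ ≤ α t * (3*G) / sε := by
              apply div_le_div_of_nonneg_left (mul_nonneg (hα t).le (by linarith)) hsε (hden k h1 h2 i).1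
          _ = α t * (3*G/sε) := by ring
      have := vradam_norm_le _ _ (mul_nonneg (hα t).le (div_nonneg (by linarith) hsε.le)) hcoord
      calc ‖w t (k+1) - w t k‖ ≤ Real.sqrt d * (α t * (3*G/sε)) := this
        _ = α t * Q := by rw [hQdef]; ring
    have hpos : ∀ k, 1 ≤ k → k ≤ m+1 → ‖w t k - wt t‖ ≤ ((k:ℝ)-1) * (α t * Q) := by
      intro k hk1
      induction k, hk1 using Nat.le_induction with
      | base => intro _; simp [hw1 t ht]
      | succ k hk ih =>
        intro hk2
        have hkm : k ≤ m := by omega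
        have h1 := ih (by omega)
        have h2 := hstep k hk hkm
        have h3 : ‖w t (k+1) - wt t‖ ≤ ‖w t (k+1) - w t k‖ + ‖w t k - wt t‖ := by
          calc ‖w t (k+1) - wt t‖ = ‖(w t (k+1) - w t k) + (w t k - wt t)‖ := by congr 1; abel
            _ ≤ _ := norm_add_le _ _
        push_cast
        have hαQ : 0 ≤ α t * Q := mul_nonneg (hα t).le hQ0
        calc ‖w t (k+1) - wt t‖ ≤ ‖w t (k+1) - w t k‖ + ‖w t k - wt t‖ := h3
          _ ≤ α t * Q + ((k:ℝ)-1) * (α t * Q) := add_le_add h2 h1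
          _ = ((k:ℝ)+1-1) * (α t * Q) := by ring
    -- per-inner-step descent
    set Et := L * ((m:ℝ) * (α t * Q)) with hEtdef
    have hEt0 : 0 ≤ Et := mul_nonneg hL.le (mul_nonneg hmR.le (mul_nonneg (hα t).le hQ0))
    have hgdev_fine : ∀ j, 1 ≤ j → j ≤ m → ‖g t j - hh‖ ≤ Et := by
      intro j h1 h2
      calc ‖g t j - hh‖ ≤ L * ‖w t j - wt t‖ := hgdev j h1 h2
        _ ≤ L * ((m:ℝ) * (α t * Q)) := by
            apply mul_le_mul_of_nonneg_left ?_ hL.le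
            calc ‖w t j - wt t‖ ≤ ((j:ℝ)-1) * (α t * Q) := hpos j h1 (by omega)
              _ ≤ (m:ℝ) * (α t * Q) := by
                  apply mul_le_mul_of_nonneg_right ?_ (mul_nonneg (hα t).le hQ0)
                  have : (j:ℝ) ≤ (m:ℝ) := Nat.cast_le.2 h2
                  linarith
        _ = Et := rfl
    have step : ∀ k, 1 ≤ k → k ≤ m →
        fullLoss d N f (w t (k+1)) ≤ fullLoss d N f (w t k)
          - α t * (‖hh‖^2/Dmax) + C₂ * α t^2 := by
      intro k hk1 hkm
      have hb1 : 0 < 1-β₁^k := hβ₁klt k hk1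
      set den : Fin d → ℝ := fun i => Real.sqrt (v t k i/(1-β₂^k)+ε) with hdendef
      have hdenp : ∀ i, 0 < den i := fun i => lt_of_lt_of_le hsε (hden k hk1 hkm i).1
      set mt : EuclideanSpace ℝ (Fin d) := (1-β₁^k)⁻¹ • mm t k with hmtdef
      set q : EuclideanSpace ℝ (Fin d) := WithLp.toLp 2 (fun i => mt i / den i) with hqdef
      have hq_coord : ∀ i, q i = (mm t k i/(1-β₁^k))/den i := by
        intro i
        have : mt i = (1-β₁^k)⁻¹ * mm t k i := rfl
        rw [hqdef]
        show mt i / den i = _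
        rw [this, inv_mul_eq_div]
      have hupdate : w t (k+1) - w t k = (-(α t)) • q := by
        ext i
        have hrec := hwrec t ht k (Finset.mem_Icc.2 ⟨hk1, hkm⟩) i
        show w t (k+1) i - w t k i = -(α t) * q i
        rw [hq_coord i, hrec, hdendef]
        ring
      have hmtdev : ‖mt - hh‖ ≤ Et := by
        have h1 := hmmE Et hEt0 hgdev_fine k hkm
        have heq : mt - hh = (1-β₁^k)⁻¹ • (mm t k - (1-β₁^k) • hh) := by
          rw [hmtdef, smul_sub, smul_smul, inv_mul_cancel₀ hb1.ne', one_smul]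
        rw [heq, norm_smul, Real.norm_eq_abs, abs_of_pos (inv_pos.2 hb1)]
        calc (1-β₁^k)⁻¹ * ‖mm t k - (1-β₁^k) • hh‖
            ≤ (1-β₁^k)⁻¹ * ((1-β₁^k) * Et) :=
              mul_le_mul_of_nonneg_left h1 (inv_pos.2 hb1).le
          _ = Et := by rw [← mul_assoc, inv_mul_cancel₀ hb1.ne', one_mul]
      have hq_abs : ∀ i, |q i| ≤ 3*G/sε := by
        intro i
        rw [hq_coord i]
        have hmi : |mm t k i / (1-β₁^k)| ≤ 3*G := by
          rw [abs_div, abs_of_pos hb1, div_le_iff₀ hb1]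
          calc |mm t k i| ≤ ‖mm t k‖ := vradam_coord_le_norm _ i
            _ ≤ (1-β₁^k)*(3*G) := hmm_crude k hkm
            _ = 3*G*(1-β₁^k) := by ring
        rw [abs_div, abs_of_pos (hdenp i)]
        calc |mm t k i/(1-β₁^k)| / den i ≤ (3*G) / den i :=
              (div_le_div_iff_of_pos_right (hdenp i)).2 hmi
          _ ≤ 3*G/sε := div_le_div_of_nonneg_left (by linarith) hsε (hden k hk1 hkm i).1
      have hq_norm : ‖q‖ ≤ Q := by
        have := vradam_norm_le q (3*G/sε) (div_nonneg (by linarith) hsε.le) hq_abs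
        rw [hQdef]
        exact this
      -- inner product lower bounds
      have key_inner : (⟪hh, q⟫_ℝ : ℝ) ≥ ‖hh‖^2/Dmax - G * (Et/sε) := by
        set r : EuclideanSpace ℝ (Fin d) := WithLp.toLp 2 (fun i => (mt i - hh i)/den i) with hrdef
        have hsplit : (⟪hh, q⟫_ℝ : ℝ) = (∑ i, (hh i)^2/den i) + ⟪hh, r⟫_ℝ := by
          rw [vradam_inner_eq, vradam_inner_eq, ← Finset.sum_add_distrib]
          apply Finset.sum_congr rfl
          intro i _
          have hq_i : q i = mt i / den i := rfl
          have hr_i : r i = (mt i - hh i)/den i := rfl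
          rw [hq_i, hr_i]
          ring
        have h1 : ‖hh‖^2/Dmax ≤ ∑ i, (hh i)^2/den i := by
          rw [vradam_euclid_norm_sq, Finset.sum_div]
          apply Finset.sum_le_sum
          intro i _
          exact div_le_div_of_nonneg_left (sq_nonneg _) (hdenp i) (hden k hk1 hkm i).2
        have h2 : -(G * (Et/sε)) ≤ (⟪hh, r⟫_ℝ : ℝ) := by
          have hr_norm : ‖r‖ ≤ ‖mt - hh‖/sε := by
            apply vradam_norm_le_norm_div r (mt - hh) sε hsε
            intro i
            have hmh : (mt - hh) i = mt i - hh i := rfl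
            have hr_i : r i = (mt i - hh i)/den i := rfl
            rw [hr_i, hmh, abs_div, abs_of_pos (hdenp i)]
            exact div_le_div_of_nonneg_left (abs_nonneg _) hsε (hden k hk1 hkm i).1
          have habs : |(⟪hh, r⟫_ℝ : ℝ)| ≤ ‖hh‖ * ‖r‖ := abs_real_inner_le_norm _ _
          have hbound : ‖hh‖ * ‖r‖ ≤ G * (Et/sε) := by
            apply mul_le_mul hhG ?_ (norm_nonneg _) hG.le
            calc ‖r‖ ≤ ‖mt - hh‖/sε := hr_norm
              _ ≤ Et/sε := (div_le_div_iff_of_pos_right hsε).2 hmtdev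
          have := neg_abs_le (⟪hh, r⟫_ℝ : ℝ)
          linarith
        linarith
      have hdiff_inner : (⟪gradient (fullLoss d N f) (w t k) - hh, q⟫_ℝ : ℝ) ≥ -(Et * Q) := by
        have habs : |(⟪gradient (fullLoss d N f) (w t k) - hh, q⟫_ℝ : ℝ)|
            ≤ ‖gradient (fullLoss d N f) (w t k) - hh‖ * ‖q‖ := abs_real_inner_le_norm _ _
        have hdev : ‖gradient (fullLoss d N f) (w t k) - hh‖ ≤ Et := by
          rw [hhdef]
          calc ‖gradient (fullLoss d N f) (w t k) - gradient (fullLoss d N f) (wt t)‖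
              ≤ L * ‖w t k - wt t‖ := hFl_lip_norm _ _
            _ ≤ L * ((m:ℝ) * (α t * Q)) := by
                apply mul_le_mul_of_nonneg_left ?_ hL.le
                calc ‖w t k - wt t‖ ≤ ((k:ℝ)-1)*(α t * Q) := hpos k hk1 (by omega)
                  _ ≤ (m:ℝ)*(α t * Q) := by
                      apply mul_le_mul_of_nonneg_right ?_ (mul_nonneg (hα t).le hQ0)
                      have : (k:ℝ) ≤ (m:ℝ) := Nat.cast_le.2 hkm
                      linarith
            _ = Et := rfl
        have hbound : ‖gradient (fullLoss d N f) (w t k) - hh‖ * ‖q‖ ≤ Et * Q :=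
          mul_le_mul hdev hq_norm (norm_nonneg _) hEt0
        have := neg_abs_le (⟪gradient (fullLoss d N f) (w t k) - hh, q⟫_ℝ : ℝ)
        linarith
      -- assemble via the descent lemma
      have hdesc := vradam_descent_lemma (fullLoss d N f) L hL hFl_diff hFl_lip
        (w t k) (w t (k+1))
      rw [hupdate] at hdesc
      rw [real_inner_smul_right] at hdesc
      have hnq : ‖(-(α t)) • q‖^2 = α t^2 * ‖q‖^2 := by
        rw [norm_smul, Real.norm_eq_abs, abs_neg, abs_of_pos (hα t), mul_pow]
      rw [hnq] at hdesc
      have hinner_split : (⟪gradient (fullLoss d N f) (w t k), q⟫_ℝ : ℝ)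
          = ⟪hh, q⟫_ℝ + ⟪gradient (fullLoss d N f) (w t k) - hh, q⟫_ℝ := by
        rw [inner_sub_left]
        ring
      have hX : (⟪gradient (fullLoss d N f) (w t k), q⟫_ℝ : ℝ)
          ≥ ‖hh‖^2/Dmax - α t * C₁ := by
        rw [hinner_split]
        have hcalc : G * (Et/sε) + Et * Q = α t * C₁ := by
          rw [hEtdef, hC₁def]
          ring
        linarith
      have e1 : -(α t) * (⟪gradient (fullLoss d N f) (w t k), q⟫_ℝ : ℝ)
          ≤ -(α t * (‖hh‖^2/Dmax)) + α t^2 * C₁ := by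
        have hmul := mul_le_mul_of_nonneg_left hX (hα t).le
        have hring : α t * (‖hh‖^2/Dmax - α t * C₁)
            = α t * (‖hh‖^2/Dmax) - α t^2 * C₁ := by ring
        nlinarith [hmul]
      have e2 : L/2 * (α t^2 * ‖q‖^2) ≤ L/2 * (α t^2 * Q^2) := by
        apply mul_le_mul_of_nonneg_left ?_ (by linarith)
        apply mul_le_mul_of_nonneg_left ?_ (sq_nonneg _)
        exact pow_le_pow_left₀ (norm_nonneg _) hq_norm 2
      have hC₂e : C₂ * α t^2 = α t^2 * C₁ + L/2 * (α t^2 * Q^2) := by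
        rw [hC₂def]; ring
      linarith
    -- telescope the inner loop
    have tele : ∀ k, 1 ≤ k → k ≤ m+1 →
        fullLoss d N f (w t k) ≤ fullLoss d N f (wt t)
          - ((k:ℝ)-1) * (α t * (‖hh‖^2/Dmax)) + ((k:ℝ)-1)*(C₂*α t^2) := by
      intro k hk1
      induction k, hk1 using Nat.le_induction with
      | base => intro _; simp [hw1 t ht]
      | succ k hk ih =>
        intro hk2
        have hkm : k ≤ m := by omega
        have h1 := ih (by omega)
        have h2 := step k hk hkm
        push_cast
        have hnn : 0 ≤ α t * (‖hh‖^2/Dmax) := mul_nonneg (hα t).le (div_nonneg (sq_nonneg _) hDmax.le)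
        nlinarith [h1, h2]
    have hfin := tele (m+1) (by omega) (by omega)
    rw [← hnext t ht] at hfin
    push_cast at hfin
    calc fullLoss d N f (wt (t+1))
        ≤ fullLoss d N f (wt t) - ((m:ℝ)+1-1) * (α t * (‖hh‖^2/Dmax))
          + ((m:ℝ)+1-1)*(C₂*α t^2) := hfin
      _ = fullLoss d N f (wt t) - (m:ℝ) * (α t * (‖hh‖^2/Dmax)) + (m:ℝ)*(C₂*α t^2) := by
          ring

  -- outer telescoping
  set a : ℕ → ℝ := fun s => α s * ‖gradient (fullLoss d N f) (wt s)‖^2 with hadef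
  have ha_nonneg : ∀ s, 0 ≤ a s := fun s => mul_nonneg (hα s).le (sq_nonneg _)
  have tsum2 : Summable fun s => α (s+1)^2 := (summable_nat_add_iff 1).2 hsq
  set S2 := ∑' s, α (s+1)^2 with hS2def
  have hterm : ∀ s : ℕ, (m:ℝ) * (α s * (‖gradient (fullLoss d N f) (wt s)‖^2 / Dmax))
      = ((m:ℝ)/Dmax) * a s := by
    intro s
    rw [hadef]
    field_simp
  have htermnn : ∀ s : ℕ, 0 ≤ ((m:ℝ)/Dmax) * a s := fun s =>
    mul_nonneg (div_nonneg hmR.le hDmax.le) (ha_nonneg s)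
  have hpartial0 : ∀ T : ℕ, ∑ s ∈ Finset.range T, ((m:ℝ)/Dmax) * a (s+1)
      ≤ fullLoss d N f (wt 1) - fullLoss d N f (wt (T+1))
        + ∑ s ∈ Finset.range T, (m:ℝ)*(C₂*α (s+1)^2) := by
    intro T
    induction T with
    | zero => simp
    | succ T ih =>
      rw [Finset.sum_range_succ, Finset.sum_range_succ]
      have hk := key (T+1) (Nat.le_add_left 1 T)
      rw [hterm (T+1)] at hk
      linarith
  have hpartial : ∀ T : ℕ, ∑ s ∈ Finset.range T, ((m:ℝ)/Dmax) * a (s+1)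
      ≤ fullLoss d N f (wt 1) - Finf + (m:ℝ)*C₂*S2 := by
    intro T
    have h1 := hpartial0 T
    have h2 : fullLoss d N f (wt 1) - fullLoss d N f (wt (T+1))
        ≤ fullLoss d N f (wt 1) - Finf := by
      linarith [hFinf (wt (T+1))]
    have h3 : ∑ s ∈ Finset.range T, (m:ℝ)*(C₂*α (s+1)^2)
        = (m:ℝ)*C₂*∑ s ∈ Finset.range T, α (s+1)^2 := by
      rw [Finset.mul_sum]
      apply Finset.sum_congr rfl
      intro s _
      ring
    have h4 : ∑ s ∈ Finset.range T, α (s+1)^2 ≤ S2 :=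
      Summable.sum_le_tsum _ (fun i _ => sq_nonneg _) tsum2
    have h5 : (m:ℝ)*C₂*∑ s ∈ Finset.range T, α (s+1)^2 ≤ (m:ℝ)*C₂*S2 :=
      mul_le_mul_of_nonneg_left h4 (mul_nonneg hmR.le hC₂0)
    rw [h3] at h1
    exact h1.trans (add_le_add h2 h5)
  have hsum_a : Summable fun s => a (s+1) := by
    have hs1 : Summable fun s => ((m:ℝ)/Dmax) * a (s+1) :=
      summable_of_sum_range_le (fun s => htermnn (s+1)) hpartial
    have hmD : ((m:ℝ)/Dmax) ≠ 0 := (div_pos hmR hDmax).ne'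
    have := hs1.mul_left (Dmax/(m:ℝ))
    apply this.congr
    intro s
    field_simp
  -- liminf
  have hub : IsBoundedUnder (· ≤ ·) atTop (fun t => ‖gradient (fullLoss d N f) (wt t)‖) :=
    isBoundedUnder_of ⟨G, fun t => hgradFl_bdd (wt t)⟩
  have hcb : IsCoboundedUnder (· ≥ ·) atTop (fun t => ‖gradient (fullLoss d N f) (wt t)‖) :=
    hub.isCoboundedUnder_ge
  have hlb : IsBoundedUnder (· ≥ ·) atTop (fun t => ‖gradient (fullLoss d N f) (wt t)‖) :=
    isBoundedUnder_of ⟨0, fun t => norm_nonneg _⟩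
  have hge : 0 ≤ liminf (fun t => ‖gradient (fullLoss d N f) (wt t)‖) atTop :=
    le_liminf_of_le hcb (Eventually.of_forall fun t => norm_nonneg _)
  have hle : liminf (fun t => ‖gradient (fullLoss d N f) (wt t)‖) atTop ≤ 0 := by
    by_contra hpos
    push_neg at hpos
    set c := liminf (fun t => ‖gradient (fullLoss d N f) (wt t)‖) atTop with hcdef
    have hc2 : 0 < c/2 := by linarith
    have hev : ∀ᶠ t in atTop, c/2 < ‖gradient (fullLoss d N f) (wt t)‖ :=
      eventually_lt_of_lt_liminf (by linarith) hlb
    obtain ⟨T₀, hT₀⟩ := eventually_atTop.1 hev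
    have hsummable : Summable α := by
      rw [← summable_nat_add_iff (T₀+1)]
      have hs0 : Summable fun sn : ℕ => a (sn + (T₀ + 1)) :=
        (summable_nat_add_iff (f := fun s => a (s+1)) T₀).2 hsum_a
      have hsa : Summable fun sn : ℕ => (4/c^2) * a (sn + (T₀+1)) := hs0.mul_left _
      refine Summable.of_nonneg_of_le (fun s => (hα _).le) (fun s => ?_) hsa
      have hbig : c/2 < ‖gradient (fullLoss d N f) (wt (s + (T₀ + 1)))‖ :=
        hT₀ _ (by omega)
      have hsq' : (c/2)^2 ≤ ‖gradient (fullLoss d N f) (wt (s + (T₀ + 1)))‖^2 :=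
        pow_le_pow_left₀ hc2.le hbig.le 2
      have h1 : α (s + (T₀ + 1)) * (c/2)^2 ≤ a (s + (T₀ + 1)) := by
        rw [hadef]
        exact mul_le_mul_of_nonneg_left hsq' (hα _).le
      have hcne : c ≠ 0 := by linarith
      have h2 : (4/c^2) * (α (s + (T₀ + 1)) * (c/2)^2) ≤ (4/c^2) * a (s + (T₀ + 1)) :=
        mul_le_mul_of_nonneg_left h1 (div_nonneg (by norm_num) (sq_nonneg c))
      have h3 : (4/c^2) * (α (s + (T₀ + 1)) * (c/2)^2) = α (s + (T₀ + 1)) := by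
        field_simp
        ring
      linarith
    exact hdiv hsummable
  linarith
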